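/- For complex numbers $x,y$ and a positive integer $n$ (with no denominator vanishing), $\sum_{k=0}^n(-1)^k\binom{n}{k}\frac{\binom{2x-y+n+k}{k}\binom{y+k}{k}}{\binom{x+k}{k}^2}\,\frac{y}{y+k}\,H_k^{\langle2\rangle}(x)=\frac{\binom{x-y+n}{n}^2}{\binom{x+n}{n}^2}\Big(H_n^{\langle2\rangle}(x)-H_n^{\langle2\rangle}(x-y)\Big)$. -/

import Mathlib

open Finset

noncomputable def gbinom (w : ℂ) (k : ℕ) : ℂ :=
  (∏ i ∈ Finset.range k, (w - i)) / (Nat.factorial k)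

noncomputable def genH (l : ℕ) (x : ℂ) (n : ℕ) : ℂ :=
  ∑ i ∈ Finset.range n, 1 / (x + (i + 1)) ^ l


noncomputable def poch (w : ℂ) (k : ℕ) : ℂ := ∏ i ∈ Finset.range k, (w + i)
lemma poch_succ (w : ℂ) (k : ℕ) : poch w (k+1) = poch w k * (w + k) :=
  Finset.prod_range_succ _ _
lemma poch_succ' (w : ℂ) (k : ℕ) : poch w (k+1) = w * poch (w+1) k := by
  rw [poch, Finset.prod_range_succ']
  simp only [Nat.cast_zero, add_zero]
  rw [mul_comm, poch]
  congr 1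
  exact Finset.prod_congr rfl fun i _ => by push_cast; ring

noncomputable def Tm (n : ℕ) (a b c d : ℂ) (k : ℕ) : ℂ :=
  (-1)^k * (n.choose k) * poch a k * poch b k * ∏ i ∈ Finset.Ico k n, ((c+(i:ℂ))*(d+(i:ℂ)))

noncomputable def gw (n : ℕ) (a b c d : ℂ) : ℕ → ℂ
  | 0 => 0
  | (j+1) => (-1)^j * (n.choose j) * poch a (j+1) * poch (b+1) j * (b+(n:ℂ)+1) *
      ∏ i ∈ Finset.Ico j n, ((c+(i:ℂ))*(d+(i:ℂ)))

lemma key_scalar (a c d b nn jj u v : ℂ) (hb : b = c+d+nn-1-a) (hj : jj + 1 ≠ 0)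
    (hc : v*(jj+1) = u*(nn-jj)) :
    (u+v) * ((b+1+jj)*(c+nn)*(d+nn)) =
      v * (b*(c-a+nn)*(d-a+nn)) + v*((a+jj+1)*(b+1+jj)*(b+nn+1)) +
        u * ((b+nn+1)*(c+jj)*(d+jj)) := by
  subst hb
  apply mul_left_cancel₀ hj
  linear_combination (((c+d+nn-1-a+1+jj)*(c+nn)*(d+nn) - (c+d+nn-1-a)*(c-a+nn)*(d-a+nn)
      - (a+jj+1)*(c+d+nn-1-a+1+jj)*(c+d+nn-1-a+nn+1))) * hc

lemma wz (n : ℕ) (a b c d : ℂ) (hb : b = c+d+(n:ℂ)-1-a) (k : ℕ) (hk : k ≤ n+1) :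
    Tm (n+1) a (b+1) c d k =
      (c-a+(n:ℂ))*(d-a+(n:ℂ)) * Tm n a b c d k + (gw n a b c d (k+1) - gw n a b c d k) := by
  match k with
  | 0 =>
    simp only [Tm, gw, pow_zero, Nat.choose_zero_right, Nat.cast_one, one_mul, poch,
      Finset.range_zero, Finset.prod_empty, mul_one, Finset.prod_range_one, Nat.cast_zero,
      add_zero, sub_zero, zero_add]
    rw [Finset.prod_Ico_succ_top (Nat.zero_le n)]
    subst hb; ring
  | (j+1) =>
    rcases Nat.lt_or_ge j n with hjn | hjn
    · -- main case 1 ≤ k ≤ n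
      simp only [Tm, gw]
      rw [Finset.prod_Ico_succ_top (by omega : j+1 ≤ n),
        Finset.prod_eq_prod_Ico_succ_bot (by omega : j < n)]
      rw [poch_succ' b j]
      rw [show poch a (j+1+1) = poch a (j+1) * (a + ((j:ℂ)+1)) from by
        rw [poch_succ]; push_cast; ring]
      rw [poch_succ (b+1) j]
      have hj1 : ((j:ℂ)+1) ≠ 0 := by
        have h0 : ((j+1:ℕ):ℂ) ≠ 0 := Nat.cast_ne_zero.mpr (Nat.succ_ne_zero j)
        push_cast at h0; exact h0
      have hc : ((n.choose (j+1) : ℕ) : ℂ) * ((j:ℂ)+1) =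
          ((n.choose j : ℕ) : ℂ) * ((n:ℂ) - (j:ℂ)) := by
        have h := Nat.choose_succ_right_eq n j
        have h2 : ((n.choose (j+1) * (j+1) : ℕ) : ℂ) = ((n.choose j * (n - j) : ℕ) : ℂ) := by
          exact_mod_cast congrArg (Nat.cast (R := ℂ)) h
        push_cast [Nat.cast_sub (le_of_lt hjn)] at h2
        exact h2
      have hp : (((n+1).choose (j+1) : ℕ) : ℂ) =
          ((n.choose j : ℕ) : ℂ) + ((n.choose (j+1) : ℕ) : ℂ) := by
        exact_mod_cast congrArg (Nat.cast (R := ℂ)) (Nat.choose_succ_succ n j)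
      have hkey := key_scalar a c d b (n:ℂ) (j:ℂ) ((n.choose j : ℕ) : ℂ)
        ((n.choose (j+1) : ℕ) : ℂ) hb hj1 hc
      rw [hp]
      push_cast
      linear_combination ((-1:ℂ))^(j+1) * poch a (j+1) * poch (b+1) j *
        (∏ i ∈ Finset.Ico (j+1) n, ((c+(i:ℂ))*(d+(i:ℂ)))) * hkey
    · -- boundary case k = n+1
      have hj : j = n := by omega
      subst hj
      simp only [Tm, gw, Nat.choose_succ_self, Nat.cast_zero, Nat.choose_self, Nat.cast_one,
        Finset.Ico_self, Finset.prod_empty, mul_one, zero_mul, mul_zero, zero_sub]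
      rw [poch_succ (b+1) j]
      ring

lemma claimB (n : ℕ) (a c d : ℂ) :
    ∑ k ∈ Finset.range (n+1), Tm n a (c+d+(n:ℂ)-1-a) c d k
      = ∏ i ∈ Finset.range n, ((c-a+(i:ℂ))*(d-a+(i:ℂ))) := by
  induction n with
  | zero => simp [Tm, poch]
  | succ n ih =>
    have hb : (c+d+((n+1:ℕ):ℂ)-1-a) = (c+d+(n:ℂ)-1-a) + 1 := by push_cast; ring
    rw [hb]
    have hsum : ∀ k ∈ Finset.range (n+2), Tm (n+1) a ((c+d+(n:ℂ)-1-a)+1) c d k =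
        (c-a+(n:ℂ))*(d-a+(n:ℂ)) * Tm n a (c+d+(n:ℂ)-1-a) c d k +
          (gw n a (c+d+(n:ℂ)-1-a) c d (k+1) - gw n a (c+d+(n:ℂ)-1-a) c d k) := by
      intro k hk
      exact wz n a _ c d rfl k (Nat.lt_succ_iff.mp (Finset.mem_range.mp hk))
    rw [Finset.sum_congr rfl hsum, Finset.sum_add_distrib, ← Finset.mul_sum,
      Finset.sum_range_sub (gw n a (c+d+(n:ℂ)-1-a) c d)]
    have hg0 : gw n a (c+d+(n:ℂ)-1-a) c d (n+1+1) = 0 := by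
      simp [gw, Nat.choose_succ_self]
    rw [hg0]
    rw [Finset.sum_range_succ]
    have hT : Tm n a (c+d+(n:ℂ)-1-a) c d (n+1) = 0 := by simp [Tm, Nat.choose_succ_self]
    rw [hT, add_zero, ih, Finset.prod_range_succ]
    simp only [gw]
    push_cast
    ring

lemma claimT (n : ℕ) (x y t : ℂ) :
    ∑ k ∈ Finset.range (n+1), ((-1:ℂ)^k * (n.choose k) * poch y k * poch (2*x-y+(n:ℂ)+1) k *
        ∏ i ∈ Finset.Ico k n, ((x+1+(i:ℂ))^2 - t))
      = ∏ i ∈ Finset.range n, ((x-y+1+(i:ℂ))^2 - t) := by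
  obtain ⟨ε, hε⟩ := IsAlgClosed.exists_pow_nat_eq t (n := 2) (by norm_num)
  have h := claimB n y (x+1+ε) (x+1-ε)
  rw [show (x+1+ε)+(x+1-ε)+(n:ℂ)-1-y = 2*x-y+(n:ℂ)+1 from by ring] at h
  have hL : ∑ k ∈ Finset.range (n+1), Tm n y (2*x-y+(n:ℂ)+1) (x+1+ε) (x+1-ε) k
      = ∑ k ∈ Finset.range (n+1), ((-1:ℂ)^k * (n.choose k) * poch y k * poch (2*x-y+(n:ℂ)+1) k *
        ∏ i ∈ Finset.Ico k n, ((x+1+(i:ℂ))^2 - t)) := by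
    refine Finset.sum_congr rfl fun k _ => ?_
    simp only [Tm]
    congr 1
    refine Finset.prod_congr rfl fun i _ => ?_
    rw [← hε]; ring
  have hR : ∏ i ∈ Finset.range n, ((x+1+ε-y+(i:ℂ))*(x+1-ε-y+(i:ℂ)))
      = ∏ i ∈ Finset.range n, ((x-y+1+(i:ℂ))^2 - t) := by
    refine Finset.prod_congr rfl fun i _ => ?_
    rw [← hε]; ring
  rw [← hL, ← hR]
  exact h

open Polynomial in
lemma coeffZeroProd (s : Finset ℕ) (f : ℕ → ℂ) :
    (∏ i ∈ s, (C (f i) - X)).coeff 0 = ∏ i ∈ s, f i := by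
  rw [Polynomial.coeff_zero_eq_eval_zero]
  simp [Polynomial.eval_prod]

open Polynomial in
lemma coeffOneProd (s : Finset ℕ) (f : ℕ → ℂ) :
    (∏ i ∈ s, (C (f i) - X)).coeff 1 = -∑ j ∈ s, ∏ i ∈ s.erase j, f i := by
  classical
  induction s using Finset.induction_on with
  | empty => simp [Polynomial.coeff_one]
  | @insert a s ha ih =>
    rw [Finset.prod_insert ha, sub_mul, Polynomial.coeff_sub, Polynomial.coeff_C_mul, ih,
      show (1:ℕ) = 0 + 1 from rfl, Polynomial.coeff_X_mul, coeffZeroProd,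
      Finset.sum_insert ha, Finset.erase_insert ha]
    have hcg : ∑ j ∈ s, ∏ i ∈ (insert a s).erase j, f i
        = ∑ j ∈ s, f a * ∏ i ∈ s.erase j, f i := by
      refine Finset.sum_congr rfl fun j hj => ?_
      have hne : a ≠ j := fun h => ha (h ▸ hj)
      rw [Finset.erase_insert_of_ne hne,
        Finset.prod_insert (fun h => ha (Finset.mem_of_mem_erase h))]
    rw [hcg, ← Finset.mul_sum]
    ring

open Polynomial in
lemma polyEq (n : ℕ) (x y : ℂ) :
    (∑ k ∈ Finset.range (n+1), C ((-1:ℂ)^k * (n.choose k) * poch y k * poch (2*x-y+(n:ℂ)+1) k) *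
        ∏ i ∈ Finset.Ico k n, (C ((x+1+(i:ℂ))^2) - X))
      = ∏ i ∈ Finset.range n, (C ((x-y+1+(i:ℂ))^2) - X) := by
  apply Polynomial.funext
  intro t
  rw [Polynomial.eval_finset_sum]
  simp only [Polynomial.eval_mul, Polynomial.eval_C, Polynomial.eval_prod,
    Polynomial.eval_sub, Polynomial.eval_X]
  exact claimT n x y t

lemma E0 (n : ℕ) (x y : ℂ) :
    ∑ k ∈ Finset.range (n+1), ((-1:ℂ)^k * (n.choose k) * poch y k * poch (2*x-y+(n:ℂ)+1) k *
        ∏ i ∈ Finset.Ico k n, (x+1+(i:ℂ))^2)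
      = ∏ i ∈ Finset.range n, (x-y+1+(i:ℂ))^2 := by
  have h := congrArg (fun p => Polynomial.coeff p 0) (polyEq n x y)
  simp only [Polynomial.finset_sum_coeff, Polynomial.coeff_C_mul, coeffZeroProd] at h
  simpa [mul_assoc] using h

lemma E2 (n : ℕ) (x y : ℂ) :
    ∑ k ∈ Finset.range (n+1), ((-1:ℂ)^k * (n.choose k) * poch y k * poch (2*x-y+(n:ℂ)+1) k *
        ∑ j ∈ Finset.Ico k n, ∏ i ∈ (Finset.Ico k n).erase j, (x+1+(i:ℂ))^2)
      = ∑ j ∈ Finset.range n, ∏ i ∈ (Finset.range n).erase j, (x-y+1+(i:ℂ))^2 := by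
  have h := congrArg (fun p => Polynomial.coeff p 1) (polyEq n x y)
  simp only [Polynomial.finset_sum_coeff, Polynomial.coeff_C_mul, coeffOneProd,
    mul_neg, Finset.sum_neg_distrib] at h
  have h2 := neg_injective h
  simpa [mul_assoc] using h2

lemma erase_sum_eq (z : ℂ) (n k : ℕ) (hkn : k ≤ n)
    (hz : ∀ j ∈ Finset.Icc 1 n, z + (j:ℂ) ≠ 0) :
    ∑ j ∈ Finset.Ico k n, ∏ i ∈ (Finset.Ico k n).erase j, (z+1+(i:ℂ))^2
      = (∏ i ∈ Finset.Ico k n, (z+1+(i:ℂ))^2) * (genH 2 z n - genH 2 z k) := by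
  have hgen : ∑ j ∈ Finset.Ico k n, ((z+1+(j:ℂ))^2)⁻¹ = genH 2 z n - genH 2 z k := by
    rw [Finset.sum_Ico_eq_sub _ hkn, genH, genH]
    congr 1 <;>
      refine Finset.sum_congr rfl fun i _ => ?_ <;>
      · rw [one_div]
        congr 1
        ring
  rw [← hgen, Finset.mul_sum]
  refine Finset.sum_congr rfl fun j hj => ?_
  have hjn : j < n := (Finset.mem_Ico.mp hj).2
  have h := hz (j+1) (Finset.mem_Icc.mpr ⟨Nat.le_add_left 1 j, by omega⟩)
  push_cast at h
  have hj0 : (z+1+(j:ℂ)) ≠ 0 := fun hc => h (by linear_combination hc)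
  have hsq : ((z+1+(j:ℂ))^2) ≠ 0 := pow_ne_zero _ hj0
  rw [← Finset.mul_prod_erase _ _ hj, mul_comm ((z+1+(j:ℂ))^2), mul_assoc,
    mul_inv_cancel₀ hsq, mul_one]

lemma E3 (n : ℕ) (x y : ℂ)
    (hx : ∀ j ∈ Finset.Icc 1 n, x + (j:ℂ) ≠ 0)
    (hxy : ∀ j ∈ Finset.Icc 1 n, x - y + (j:ℂ) ≠ 0) :
    ∑ k ∈ Finset.range (n+1), ((-1:ℂ)^k * (n.choose k) * poch y k * poch (2*x-y+(n:ℂ)+1) k *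
        (∏ i ∈ Finset.Ico k n, (x+1+(i:ℂ))^2) * genH 2 x k)
      = (∏ i ∈ Finset.range n, (x-y+1+(i:ℂ))^2) * (genH 2 x n - genH 2 (x-y) n) := by
  have e2 := E2 n x y
  have hL : ∀ k ∈ Finset.range (n+1),
      (-1:ℂ)^k * (n.choose k) * poch y k * poch (2*x-y+(n:ℂ)+1) k *
        ∑ j ∈ Finset.Ico k n, ∏ i ∈ (Finset.Ico k n).erase j, (x+1+(i:ℂ))^2
      = (-1:ℂ)^k * (n.choose k) * poch y k * poch (2*x-y+(n:ℂ)+1) k *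
          (∏ i ∈ Finset.Ico k n, (x+1+(i:ℂ))^2) * genH 2 x n
        - (-1:ℂ)^k * (n.choose k) * poch y k * poch (2*x-y+(n:ℂ)+1) k *
          (∏ i ∈ Finset.Ico k n, (x+1+(i:ℂ))^2) * genH 2 x k := by
    intro k hk
    rw [erase_sum_eq x n k (Nat.lt_succ_iff.mp (Finset.mem_range.mp hk)) hx]
    ring
  rw [Finset.sum_congr rfl hL, Finset.sum_sub_distrib] at e2
  have hR : ∑ j ∈ Finset.range n, ∏ i ∈ (Finset.range n).erase j, (x-y+1+(i:ℂ))^2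
      = (∏ i ∈ Finset.range n, (x-y+1+(i:ℂ))^2) * genH 2 (x-y) n := by
    rw [Finset.range_eq_Ico, erase_sum_eq (x-y) n 0 (Nat.zero_le n) hxy]
    simp [genH]
  rw [hR] at e2
  have hE0 : ∑ k ∈ Finset.range (n+1), ((-1:ℂ)^k * (n.choose k) * poch y k *
      poch (2*x-y+(n:ℂ)+1) k * (∏ i ∈ Finset.Ico k n, (x+1+(i:ℂ))^2) * genH 2 x n)
      = (∏ i ∈ Finset.range n, (x-y+1+(i:ℂ))^2) * genH 2 x n := by
    rw [← Finset.sum_mul, E0 n x y]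
  rw [hE0] at e2
  linear_combination -e2

lemma gbinom_eq (w : ℂ) (k : ℕ) : gbinom (w + (k:ℂ)) k = poch (w+1) k / (k.factorial : ℂ) := by
  rw [gbinom, poch]
  congr 1
  have h1 : ∀ i ∈ Finset.range k, (w + (k:ℂ) - (i:ℂ)) = ((w+1) + ((k-1-i : ℕ):ℂ)) := by
    intro i hi
    have hik : i < k := Finset.mem_range.mp hi
    have h2 : ((k - 1 - i : ℕ) : ℂ) = (k:ℂ) - 1 - (i:ℂ) := by
      have h3 : k - 1 - i = k - (1 + i) := by omega
      rw [h3, Nat.cast_sub (by omega)]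
      push_cast; ring
    rw [h2]; ring
  rw [Finset.prod_congr rfl h1]
  exact Finset.prod_range_reflect (fun i => (w+1) + (i:ℂ)) k

theorem stmt5 (x y : ℂ) (n : ℕ) (hn : 0 < n)
    (h1 : ∀ k ≤ n, gbinom (x + k) k ≠ 0)
    (h2 : ∀ k ≤ n, y + (k : ℂ) ≠ 0)
    (h3 : ∀ k ∈ Finset.Icc 1 n, x + (k : ℂ) ≠ 0)
    (h4 : ∀ k ∈ Finset.Icc 1 n, x - y + (k : ℂ) ≠ 0) :
    ∑ k ∈ Finset.range (n + 1), (-1 : ℂ) ^ k * (n.choose k : ℂ) *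
        (gbinom (2 * x - y + n + k) k * gbinom (y + k) k / (gbinom (x + k) k) ^ 2) *
        (y / (y + k)) * genH 2 x k =
      (gbinom (x - y + n) n) ^ 2 / (gbinom (x + n) n) ^ 2 *
        (genH 2 x n - genH 2 (x - y) n) := by
  have hpoch_ne : ∀ k ≤ n, poch (x+1) k ≠ 0 := by
    intro k hk
    rw [poch]
    refine Finset.prod_ne_zero_iff.mpr fun i hi => ?_
    have hik : i < k := Finset.mem_range.mp hi
    have h := h3 (i+1) (Finset.mem_Icc.mpr ⟨Nat.le_add_left 1 i, by omega⟩)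
    push_cast at h
    exact fun hc => h (by linear_combination hc)
  have hP0 : (∏ i ∈ Finset.range n, (x+1+(i:ℂ))^2) ≠ 0 := by
    refine Finset.prod_ne_zero_iff.mpr fun i hi => ?_
    have hik : i < n := Finset.mem_range.mp hi
    have h := h3 (i+1) (Finset.mem_Icc.mpr ⟨Nat.le_add_left 1 i, by omega⟩)
    push_cast at h
    exact pow_ne_zero _ (fun hc => h (by linear_combination hc))
  apply mul_right_cancel₀ hP0
  rw [Finset.sum_mul]
  have hterm : ∀ k ∈ Finset.range (n+1),
      (-1 : ℂ) ^ k * (n.choose k : ℂ) *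
        (gbinom (2 * x - y + n + k) k * gbinom (y + k) k / (gbinom (x + k) k) ^ 2) *
        (y / (y + k)) * genH 2 x k * (∏ i ∈ Finset.range n, (x+1+(i:ℂ))^2)
      = (-1:ℂ)^k * (n.choose k) * poch y k * poch (2*x-y+(n:ℂ)+1) k *
          (∏ i ∈ Finset.Ico k n, (x+1+(i:ℂ))^2) * genH 2 x k := by
    intro k hk
    have hkn : k ≤ n := Nat.lt_succ_iff.mp (Finset.mem_range.mp hk)
    rw [gbinom_eq (2*x-y+(n:ℂ)) k, gbinom_eq y k, gbinom_eq x k]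
    have hpx := hpoch_ne k hkn
    have hfac : ((k.factorial : ℕ):ℂ) ≠ 0 := Nat.cast_ne_zero.mpr k.factorial_ne_zero
    have hyk : y + (k:ℂ) ≠ 0 := h2 k hkn
    have hy : y * poch (y+1) k = poch y k * (y+(k:ℂ)) :=
      (poch_succ' y k).symm.trans (poch_succ y k)
    have hprod : (poch (x+1) k)^2 * (∏ i ∈ Finset.Ico k n, (x+1+(i:ℂ))^2)
        = ∏ i ∈ Finset.range n, (x+1+(i:ℂ))^2 := by
      rw [poch, ← Finset.prod_pow]
      exact Finset.prod_range_mul_prod_Ico _ hkn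
    set A1 := poch (2*x-y+(n:ℂ)+1) k with hA1
    set A2 := poch (y+1) k with hA2
    set A3 := poch (x+1) k with hA3
    set A4 := poch y k with hA4
    set PA := ∏ i ∈ Finset.Ico k n, (x+1+(i:ℂ))^2 with hPA
    set Hk := genH 2 x k with hHk
    rw [← hprod]
    field_simp
    linear_combination ((n.choose k : ℂ) * A1 * Hk * PA) * hy
  rw [Finset.sum_congr rfl hterm, E3 n x y h3 h4]
  rw [gbinom_eq (x-y) n, gbinom_eq x n]
  have hpxn := hpoch_ne n le_rfl
  have hfacn : ((n.factorial : ℕ):ℂ) ≠ 0 := Nat.cast_ne_zero.mpr n.factorial_ne_zero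
  have hB : ∏ i ∈ Finset.range n, (x-y+1+(i:ℂ))^2 = (poch (x-y+1) n)^2 := by
    rw [poch, ← Finset.prod_pow]
  have hA : ∏ i ∈ Finset.range n, (x+1+(i:ℂ))^2 = (poch (x+1) n)^2 := by
    rw [poch, ← Finset.prod_pow]
  rw [hB, hA]
  set B1 := poch (x-y+1) n with hB1
  set B2 := poch (x+1) n with hB2
  field_simp
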